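/- Let Ã, B̃ ∈ ℝ^{m×n} and suppose there exists γ > 0 such that C̃ := Ã + γB̃ = D + r̂ĉᵀ, where D = 𝟙ₘuᵀ + v𝟙ₙᵀ has rank 2, rank(C̃) = 3, r̂ ∈ ℝᵐ, ĉ ∈ ℝⁿ. Then there exist x₁ ∈ ℝⁿ with C̃x₁ = 𝟙ₘ and y₁ ∈ ℝᵐ with w₁ = y₁ᵀC̃x₁ ≠ 0, and setting ûᵀ = w₁⁻¹y₁ᵀC̃ and C̃₂ = C̃ − 𝟙ₘûᵀ, there exist y₂ with y₂ᵀC̃₂ = 𝟙ₙᵀ and x₂ with w₂ = y₂ᵀC̃₂x₂ ≠ 0, such that, setting v̂ = w₂⁻¹C̃₂x₂, the matrix C̃₃ = C̃ − 𝟙ₘûᵀ − v̂𝟙ₙᵀ equals r̂ĉᵀ. Consequently, defining Â = Ã − 𝟙ₘûᵀ and B̂ = γB̃ − v̂𝟙ₙᵀ, one has Â + B̂ = r̂ĉᵀ, a rank-one matrix, and the game (Ã, B̃) is strategically equivalent to the rank-1 game (Â, B̂). -/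

import Mathlib

open Matrix

/-- `(p, q)` is a Nash equilibrium of the bimatrix game `(A, B)`. -/
def IsNashEq {m n : ℕ} (A B : Matrix (Fin m) (Fin n) ℝ)
    (p : Fin m → ℝ) (q : Fin n → ℝ) : Prop :=
  p ∈ stdSimplex ℝ (Fin m) ∧ q ∈ stdSimplex ℝ (Fin n) ∧
  (∀ p' ∈ stdSimplex ℝ (Fin m), p' ⬝ᵥ A.mulVec q ≤ p ⬝ᵥ A.mulVec q) ∧
  (∀ q' ∈ stdSimplex ℝ (Fin n), p ⬝ᵥ B.mulVec q' ≤ p ⬝ᵥ B.mulVec q)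


open Submodule Set

lemma vmv_mulVec {m n : ℕ} (a : Fin m → ℝ) (b : Fin n → ℝ) (x : Fin n → ℝ) :
    (vecMulVec a b).mulVec x = (b ⬝ᵥ x) • a := by
  ext i
  simp [vecMulVec_apply, mulVec, dotProduct, Finset.mul_sum, mul_comm, mul_left_comm, mul_assoc]

lemma vmv_vecMul {m n : ℕ} (a : Fin m → ℝ) (b : Fin n → ℝ) (y : Fin m → ℝ) :
    (vecMulVec a b).vecMul y = (y ⬝ᵥ a) • b := by
  ext j
  simp [vecMulVec_apply, vecMul, dotProduct, Finset.mul_sum, mul_comm, mul_left_comm, mul_assoc]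

lemma exists_dual {k : ℕ} {ι : Type} [Fintype ι] [DecidableEq ι] (w : ι → (Fin k → ℝ))
    (h : LinearIndependent ℝ w) (t : ι → ℝ) :
    ∃ y : Fin k → ℝ, ∀ i, y ⬝ᵥ w i = t i := by
  classical
  set b := Module.Basis.span h with hb
  set f : span ℝ (Set.range w) →ₗ[ℝ] ℝ := ∑ i, t i • b.coord i with hf
  obtain ⟨g, hg⟩ := f.exists_extend
  refine ⟨fun j => g (Pi.single j 1), fun i => ?_⟩
  have h1 : g (w i) = t i := by
    have h2 : g ((span ℝ (Set.range w)).subtype ⟨w i, subset_span (mem_range_self i)⟩) =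
        f ⟨w i, subset_span (mem_range_self i)⟩ := by
      rw [← hg]; rfl
    have h3 : (⟨w i, subset_span (mem_range_self i)⟩ : span ℝ (Set.range w)) = b i := by
      apply Subtype.ext
      simp [hb, Module.Basis.span_apply]
    rw [Submodule.subtype_apply] at h2
    rw [h2, h3, hf]
    simp [Module.Basis.coord_apply, Module.Basis.repr_self, Finsupp.single_apply]
  have h4 := g.pi_apply_eq_sum_univ (w i)
  rw [h1] at h4
  rw [dotProduct]
  rw [h4]
  refine Finset.sum_congr rfl fun j _ => ?_
  rw [mul_comm, smul_eq_mul]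
  congr 2
  ext j'
  simp [Pi.single_apply, eq_comm]

open Module in
lemma rank_span_lemma {k l : ℕ} (M : Matrix (Fin k) (Fin l) ℝ) {ι : Type} [Fintype ι]
    (w : ι → Fin k → ℝ) (hw : ∀ x, M.mulVec x ∈ span ℝ (Set.range w))
    (hr : M.rank = Fintype.card ι) :
    LinearIndependent ℝ w ∧ LinearMap.range M.mulVecLin = span ℝ (Set.range w) := by
  have hle : LinearMap.range M.mulVecLin ≤ span ℝ (Set.range w) := by
    rintro _ ⟨x, rfl⟩
    exact hw x
  have h1 : finrank ℝ (LinearMap.range M.mulVecLin) = Fintype.card ι := hr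
  have h2 : (Set.range w).finrank ℝ ≤ Fintype.card ι := finrank_range_le_card w
  have heq : LinearMap.range M.mulVecLin = span ℝ (Set.range w) :=
    Submodule.eq_of_le_of_finrank_le hle (by rw [h1]; exact h2)
  refine ⟨linearIndependent_iff_card_eq_finrank_span.mpr ?_, heq⟩
  rw [Set.finrank, ← heq, h1]

lemma rank_vmv_one {k l : ℕ} (a : Fin k → ℝ) (b : Fin l → ℝ) (ha : a ≠ 0) (hb : b ≠ 0) :
    (vecMulVec a b).rank = 1 := by
  have hle : LinearMap.range (vecMulVec a b).mulVecLin ≤ span ℝ {a} := by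
    rintro _ ⟨x, rfl⟩
    rw [mulVecLin_apply, vmv_mulVec]
    exact smul_mem _ _ (mem_span_singleton_self a)
  obtain ⟨j, hj⟩ : ∃ j, b j ≠ 0 := by
    by_contra hcon; push_neg at hcon; exact hb (funext hcon)
  have hmem : a ∈ LinearMap.range (vecMulVec a b).mulVecLin := by
    refine ⟨Pi.single j (b j)⁻¹, ?_⟩
    rw [mulVecLin_apply, vmv_mulVec, dotProduct_single, mul_inv_cancel₀ hj, one_smul]
  have hge : span ℝ {a} ≤ LinearMap.range (vecMulVec a b).mulVecLin :=
    span_le.mpr (by simpa using hmem)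
  rw [Matrix.rank, le_antisymm hle hge, finrank_span_singleton ha]

lemma dot_shiftA {m n : ℕ} (A : Matrix (Fin m) (Fin n) ℝ) (uh q : Fin n → ℝ) (p' : Fin m → ℝ)
    (hp' : ∑ i, p' i = 1) :
    p' ⬝ᵥ (A - vecMulVec 1 uh).mulVec q = p' ⬝ᵥ A.mulVec q - uh ⬝ᵥ q := by
  rw [sub_mulVec, dotProduct_sub, vmv_mulVec, dotProduct_smul]
  congr 1
  simp [dotProduct, hp']

lemma dot_shiftB {m n : ℕ} (B : Matrix (Fin m) (Fin n) ℝ) (γ : ℝ) (vh p : Fin m → ℝ)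
    (q' : Fin n → ℝ) (hq' : ∑ j, q' j = 1) :
    p ⬝ᵥ (γ • B - vecMulVec vh 1).mulVec q' = γ * (p ⬝ᵥ B.mulVec q') - p ⬝ᵥ vh := by
  rw [sub_mulVec, dotProduct_sub, vmv_mulVec, smul_mulVec, dotProduct_smul]
  have h1 : (1 : Fin n → ℝ) ⬝ᵥ q' = 1 := by simp [dotProduct, hq']
  rw [h1, one_smul, smul_eq_mul]

lemma nash_shift {m n : ℕ} (A B : Matrix (Fin m) (Fin n) ℝ) {γ : ℝ} (hγ : 0 < γ)
    (uh : Fin n → ℝ) (vh : Fin m → ℝ) (p : Fin m → ℝ) (q : Fin n → ℝ) :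
    IsNashEq A B p q ↔ IsNashEq (A - vecMulVec 1 uh) (γ • B - vecMulVec vh 1) p q := by
  constructor
  · rintro ⟨hp, hq, hA, hB⟩
    refine ⟨hp, hq, fun p' hp' => ?_, fun q' hq' => ?_⟩
    · rw [dot_shiftA A uh q p' hp'.2, dot_shiftA A uh q p hp.2]
      exact sub_le_sub_right (hA p' hp') _
    · rw [dot_shiftB B γ vh p q' hq'.2, dot_shiftB B γ vh p q hq.2]
      exact sub_le_sub_right (mul_le_mul_of_nonneg_left (hB q' hq') hγ.le) _
  · rintro ⟨hp, hq, hA, hB⟩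
    refine ⟨hp, hq, fun p' hp' => ?_, fun q' hq' => ?_⟩
    · have h := hA p' hp'
      rw [dot_shiftA A uh q p' hp'.2, dot_shiftA A uh q p hp.2] at h
      linarith
    · have h := hB q' hq'
      rw [dot_shiftB B γ vh p q' hq'.2, dot_shiftB B γ vh p q hq.2] at h
      have h2 : γ * (p ⬝ᵥ B.mulVec q') ≤ γ * (p ⬝ᵥ B.mulVec q) := by linarith
      exact le_of_mul_le_mul_left h2 hγ

theorem stmt12 {m n : ℕ} (Atil Btil : Matrix (Fin m) (Fin n) ℝ)
    (γ : ℝ) (hγ : 0 < γ)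
    (u : Fin n → ℝ) (v : Fin m → ℝ) (rh : Fin m → ℝ) (ch : Fin n → ℝ)
    (hD : (Matrix.vecMulVec (1 : Fin m → ℝ) u + Matrix.vecMulVec v (1 : Fin n → ℝ)).rank = 2)
    (hdecomp : Atil + γ • Btil =
      (Matrix.vecMulVec (1 : Fin m → ℝ) u + Matrix.vecMulVec v (1 : Fin n → ℝ))
        + Matrix.vecMulVec rh ch)
    (hrank : (Atil + γ • Btil).rank = 3) :
    ∃ (x₁ : Fin n → ℝ) (y₁ : Fin m → ℝ) (y₂ : Fin m → ℝ) (x₂ : Fin n → ℝ),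
      (Atil + γ • Btil).mulVec x₁ = 1 ∧
      y₁ ⬝ᵥ (Atil + γ • Btil).mulVec x₁ ≠ 0 ∧
      (let Ct := Atil + γ • Btil
       let uh := (y₁ ⬝ᵥ Ct.mulVec x₁)⁻¹ • Ct.vecMul y₁
       let Ct₂ := Ct - Matrix.vecMulVec (1 : Fin m → ℝ) uh
       Ct₂.vecMul y₂ = 1 ∧
       y₂ ⬝ᵥ Ct₂.mulVec x₂ ≠ 0 ∧
       (let vh := (y₂ ⬝ᵥ Ct₂.mulVec x₂)⁻¹ • Ct₂.mulVec x₂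
        Ct - Matrix.vecMulVec (1 : Fin m → ℝ) uh - Matrix.vecMulVec vh (1 : Fin n → ℝ)
            = Matrix.vecMulVec rh ch ∧
        ((Atil - Matrix.vecMulVec (1 : Fin m → ℝ) uh) +
            (γ • Btil - Matrix.vecMulVec vh (1 : Fin n → ℝ)))
          = Matrix.vecMulVec rh ch ∧
        ((Atil - Matrix.vecMulVec (1 : Fin m → ℝ) uh) +
            (γ • Btil - Matrix.vecMulVec vh (1 : Fin n → ℝ))).rank = 1 ∧
        (∀ (p : Fin m → ℝ) (q : Fin n → ℝ),
          IsNashEq Atil Btil p q ↔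
            IsNashEq (Atil - Matrix.vecMulVec (1 : Fin m → ℝ) uh)
              (γ • Btil - Matrix.vecMulVec vh (1 : Fin n → ℝ)) p q))) := by
  classical
  set C : Matrix (Fin m) (Fin n) ℝ := Atil + γ • Btil with hC
  -- column space
  have hcolmem : ∀ x, C.mulVec x ∈ span ℝ (Set.range ![(1 : Fin m → ℝ), v, rh]) := by
    intro x
    rw [hdecomp, add_mulVec, add_mulVec, vmv_mulVec, vmv_mulVec, vmv_mulVec]
    refine add_mem (add_mem (smul_mem _ _ (subset_span ⟨0, rfl⟩))
      (smul_mem _ _ (subset_span ⟨1, rfl⟩))) (smul_mem _ _ (subset_span ⟨2, rfl⟩))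
  obtain ⟨hindC, hrangeC⟩ := rank_span_lemma C _ hcolmem (by simpa using hrank)
  -- row space
  have hCT : Cᵀ = vecMulVec u 1 + vecMulVec (1 : Fin n → ℝ) v + vecMulVec ch rh := by
    rw [hdecomp]
    ext i j
    simp [Matrix.add_apply, vecMulVec_apply, Matrix.transpose_apply]
    ring
  have hrowmem : ∀ x, Cᵀ.mulVec x ∈ span ℝ (Set.range ![u, (1 : Fin n → ℝ), ch]) := by
    intro x
    rw [hCT, add_mulVec, add_mulVec, vmv_mulVec, vmv_mulVec, vmv_mulVec]
    refine add_mem (add_mem (smul_mem _ _ (subset_span ⟨0, rfl⟩))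
      (smul_mem _ _ (subset_span ⟨1, rfl⟩))) (smul_mem _ _ (subset_span ⟨2, rfl⟩))
  obtain ⟨hindR, -⟩ := rank_span_lemma Cᵀ _ hrowmem
    (by rw [Matrix.rank_transpose]; simpa using hrank)
  -- rh and ch are nonzero
  have hrh : rh ≠ 0 := by
    have := hindC.ne_zero 2
    simpa using this
  have hch : ch ≠ 0 := by
    have := hindR.ne_zero 2
    simpa using this
  -- x₁ with C x₁ = 1
  have h1mem : (1 : Fin m → ℝ) ∈ LinearMap.range C.mulVecLin := by
    rw [hrangeC]; exact subset_span ⟨0, rfl⟩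
  obtain ⟨x₁, hx₁⟩ := h1mem
  rw [mulVecLin_apply] at hx₁
  -- y₁ dual
  obtain ⟨y₁, hy₁⟩ := exists_dual _ hindC ![1, 0, 0]
  have hy₁1 : y₁ ⬝ᵥ (1 : Fin m → ℝ) = 1 := by simpa using hy₁ 0
  have hy₁v : y₁ ⬝ᵥ v = 0 := by simpa using hy₁ 1
  have hy₁r : y₁ ⬝ᵥ rh = 0 := by simpa using hy₁ 2
  -- y₂ dual
  obtain ⟨y₂, hy₂⟩ := exists_dual _ hindC ![0, 1, 0]
  have hy₂1 : y₂ ⬝ᵥ (1 : Fin m → ℝ) = 0 := by simpa using hy₂ 0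
  have hy₂v : y₂ ⬝ᵥ v = 1 := by simpa using hy₂ 1
  have hy₂r : y₂ ⬝ᵥ rh = 0 := by simpa using hy₂ 2
  -- x₂ dual
  obtain ⟨x₂, hx₂⟩ := exists_dual _ hindR ![0, 1, 0]
  have hx₂1 : (1 : Fin n → ℝ) ⬝ᵥ x₂ = 1 := by
    rw [dotProduct_comm]; simpa using hx₂ 1
  have hx₂c : ch ⬝ᵥ x₂ = 0 := by
    rw [dotProduct_comm]; simpa using hx₂ 2
  -- key computations
  have hw₁ : y₁ ⬝ᵥ C.mulVec x₁ = 1 := by rw [hx₁, hy₁1]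
  have hvm : Matrix.vecMul y₁ C = u := by
    rw [hdecomp, Matrix.vecMul_add, Matrix.vecMul_add, vmv_vecMul, vmv_vecMul, vmv_vecMul,
      hy₁1, hy₁v, hy₁r]
    simp
  have huh : (y₁ ⬝ᵥ C.mulVec x₁)⁻¹ • Matrix.vecMul y₁ C = u := by
    rw [hw₁, hvm]; simp
  have hC₂ : C - vecMulVec (1 : Fin m → ℝ) u = vecMulVec v 1 + vecMulVec rh ch := by
    rw [hdecomp]; abel
  have hy₂C₂ : Matrix.vecMul y₂ (C - vecMulVec (1 : Fin m → ℝ) u) = 1 := by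
    rw [hC₂, Matrix.vecMul_add, vmv_vecMul, vmv_vecMul, hy₂v, hy₂r]
    simp
  have hC₂x₂ : (C - vecMulVec (1 : Fin m → ℝ) u).mulVec x₂ = v := by
    rw [hC₂, add_mulVec, vmv_mulVec, vmv_mulVec, hx₂1, hx₂c]
    simp
  have hw₂ : y₂ ⬝ᵥ (C - vecMulVec (1 : Fin m → ℝ) u).mulVec x₂ = 1 := by
    rw [hC₂x₂, hy₂v]
  have hvh : (y₂ ⬝ᵥ (C - vecMulVec (1 : Fin m → ℝ) u).mulVec x₂)⁻¹ •
      (C - vecMulVec (1 : Fin m → ℝ) u).mulVec x₂ = v := by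
    rw [hw₂, hC₂x₂]; simp
  -- final pieces
  have hD1 : C - vecMulVec (1 : Fin m → ℝ) u - vecMulVec v (1 : Fin n → ℝ)
      = vecMulVec rh ch := by
    rw [hdecomp]; abel
  have hD2 : (Atil - vecMulVec (1 : Fin m → ℝ) u) + (γ • Btil - vecMulVec v (1 : Fin n → ℝ))
      = vecMulVec rh ch := by
    have h : (Atil - vecMulVec (1 : Fin m → ℝ) u) + (γ • Btil - vecMulVec v (1 : Fin n → ℝ))
        = C - vecMulVec (1 : Fin m → ℝ) u - vecMulVec v (1 : Fin n → ℝ) := by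
      rw [hC]; abel
    rw [h, hD1]
  have hD3 : ((Atil - vecMulVec (1 : Fin m → ℝ) u)
      + (γ • Btil - vecMulVec v (1 : Fin n → ℝ))).rank = 1 := by
    rw [hD2]; exact rank_vmv_one rh ch hrh hch
  have hD4 : ∀ (p : Fin m → ℝ) (q : Fin n → ℝ),
      IsNashEq Atil Btil p q ↔
        IsNashEq (Atil - vecMulVec (1 : Fin m → ℝ) u)
          (γ • Btil - vecMulVec v (1 : Fin n → ℝ)) p q :=
    fun p q => nash_shift Atil Btil hγ u v p q
  refine ⟨x₁, y₁, y₂, x₂, hx₁, by rw [hw₁]; exact one_ne_zero, ?_⟩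
  show Matrix.vecMul y₂ (C - vecMulVec 1 ((y₁ ⬝ᵥ C.mulVec x₁)⁻¹ • Matrix.vecMul y₁ C)) = 1 ∧ _
  rw [huh]
  refine ⟨hy₂C₂, by rw [hw₂]; exact one_ne_zero, ?_⟩
  show (C - vecMulVec (1 : Fin m → ℝ) u - vecMulVec
      ((y₂ ⬝ᵥ (C - vecMulVec (1 : Fin m → ℝ) u).mulVec x₂)⁻¹ •
        (C - vecMulVec (1 : Fin m → ℝ) u).mulVec x₂) (1 : Fin n → ℝ) = vecMulVec rh ch) ∧ _
  rw [hvh]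
  exact ⟨hD1, hD2, hD3, hD4⟩
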